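/- Contrary-signal updating: if the second backer's own signals for both projects are low, i.e. s₂ = (L,L), then observing the first backer pledge to project 1 strictly raises the second backer's posterior belief that project 1 is high-quality above the level based on his own signals alone: P(V¹=1 | x₁=1, s₂=(L,L)) > 1 − p₂, for all p₁ ∈ (1/2, 1) and p₂ ∈ [1/2, 1). -/

import Mathlib

open Finset

/-- Probability of signal pair `s` given quality state `V` for a backer with expertness `p`:
signals are independent per project and correct with probability `p`
(`true` = high quality / high signal). -/
noncomputable def sigProb (p : ℝ) (V s : Bool × Bool) : ℝ :=
  (if s.1 = V.1 then p else 1 - p) * (if s.2 = V.2 then p else 1 - p)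

/-- Bayesian posterior over quality state `V` given own signals `s`, uniform prior. -/
noncomputable def post (p : ℝ) (s V : Bool × Bool) : ℝ :=
  sigProb p V s / ∑ V' : Bool × Bool, sigProb p V' s

/-- Probability of pledging to project 1 given own signals `s`. -/
noncomputable def pledge1 (p : ℝ) (s : Bool × Bool) : ℝ :=
  post p s (true, false) + (1/2) * post p s (true, true)

/-- Probability of pledging to project 2 given own signals `s`. -/
noncomputable def pledge2 (p : ℝ) (s : Bool × Bool) : ℝ :=
  post p s (false, true) + (1/2) * post p s (true, true)

/-- Probability of abstaining given own signals `s`. -/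
noncomputable def abstain (p : ℝ) (s : Bool × Bool) : ℝ :=
  post p s (false, false)

/-- Unconditional (on signals) probability of pledging to project 1 in state `V`. -/
noncomputable def condPledge1 (p : ℝ) (V : Bool × Bool) : ℝ :=
  ∑ s : Bool × Bool, sigProb p V s * pledge1 p s

/-- Unconditional probability of pledging to project 2 in state `V`. -/
noncomputable def condPledge2 (p : ℝ) (V : Bool × Bool) : ℝ :=
  ∑ s : Bool × Bool, sigProb p V s * pledge2 p s

/-- Unconditional probability of abstaining in state `V`. -/
noncomputable def condAbstain (p : ℝ) (V : Bool × Bool) : ℝ :=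
  ∑ s : Bool × Bool, sigProb p V s * abstain p s

/-- Second backer's posterior over state `V` given that the first backer (expertness `p1`)
pledged to project 1 and own signals `s` (expertness `p2`): ∝ P(x₁=1|V)·P(s|V). -/
noncomputable def postOL (p1 p2 : ℝ) (s V : Bool × Bool) : ℝ :=
  condPledge1 p1 V * sigProb p2 V s /
    ∑ V' : Bool × Bool, condPledge1 p1 V' * sigProb p2 V' s

/-- contrary-signal updating: with own signals s₂ = (L,L), observing the
first backer pledge to project 1 raises the belief that project 1 is high-quality
above 1 − p₂, for all p₁ ∈ (1/2,1), p₂ ∈ [1/2,1). -/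
theorem stmt9 (p1 p2 : ℝ) (h1 : 1/2 < p1) (h1' : p1 < 1)
    (h2 : 1/2 ≤ p2) (h2' : p2 < 1) :
    postOL p1 p2 (false, false) (true, true)
      + postOL p1 p2 (false, false) (true, false) > 1 - p2 := by
  have hcp : ∀ V : Bool × Bool, condPledge1 p1 V =
      (if V.1 then (p1^2+(1-p1)^2) else (1-(p1^2+(1-p1)^2))) *
      (if V.2 then (2-(p1^2+(1-p1)^2)) else (1+(p1^2+(1-p1)^2))) / 2 := by
    intro V
    obtain ⟨x, y⟩ := V
    cases x <;> cases y <;>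
      · simp [condPledge1, pledge1, post, sigProb, Fintype.sum_prod_type]
        ring
  set a : ℝ := p1^2+(1-p1)^2 with ha
  have ha1 : 1/2 < a := by nlinarith [sq_nonneg (p1 - 1/2)]
  have ha2 : a < 1 := by nlinarith
  clear_value a
  clear ha
  have hD : (0:ℝ) < ∑ V' : Bool × Bool,
      condPledge1 p1 V' * sigProb p2 V' (false, false) := by
    simp only [Fintype.sum_prod_type, Fintype.sum_bool, hcp, sigProb]
    simp only [if_true, if_false]
    norm_num
    have hq : (0:ℝ) < 1 - p2 := by linarith
    have hp : (0:ℝ) < p2 := by linarith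
    have h1a : (0:ℝ) < 1 - a := by nlinarith
    nlinarith [mul_pos (mul_pos (by linarith : (0:ℝ) < a) (by linarith : (0:ℝ) < 2-a)) (mul_pos hq hq), mul_pos (mul_pos (mul_pos h1a (by linarith : (0:ℝ) < 1+a)) hp) hp, mul_pos (mul_pos (mul_pos (by linarith : (0:ℝ) < a) (by linarith : (0:ℝ) < 1+a)) hq) hp, mul_pos (mul_pos (mul_pos h1a (by linarith : (0:ℝ) < 2-a)) hp) hq]
  rw [postOL, postOL, ← add_div, gt_iff_lt, lt_div_iff₀ hD]
  simp only [Fintype.sum_prod_type, Fintype.sum_bool, hcp, sigProb]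
  simp only [if_true, if_false]
  norm_num
  have hq : (0:ℝ) < 1 - p2 := by linarith
  have hp : (0:ℝ) < p2 := by linarith
  have hbr : (0:ℝ) < (2-a)*(1-p2) + (1+a)*p2 := by nlinarith
  have h := mul_pos (mul_pos (mul_pos hp hq) (by linarith : (0:ℝ) < 2*a-1)) hbr
  nlinarith [h]
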